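/- The elements e1^l, e2^l, e3^l and z are central in U_q^+(B_2), i.e., each of them commutes with each of the generators e1, e2, e3 and z. -/

import Mathlib

noncomputable section

open MulOpposite

/-- The defining relations of `U_q^+(B_2)` on the free algebra on generators
`e1 = ι 0`, `e2 = ι 1`, `e3 = ι 2`, `z = ι 3`. -/
inductive UqB2Rel (K : Type*) [Field K] (q : K) :
    FreeAlgebra K (Fin 4) → FreeAlgebra K (Fin 4) → Prop
  | e1z : UqB2Rel K q (FreeAlgebra.ι K 0 * FreeAlgebra.ι K 3)
      (FreeAlgebra.ι K 3 * FreeAlgebra.ι K 0)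
  | e2z : UqB2Rel K q (FreeAlgebra.ι K 1 * FreeAlgebra.ι K 3)
      (FreeAlgebra.ι K 3 * FreeAlgebra.ι K 1)
  | e3z : UqB2Rel K q (FreeAlgebra.ι K 2 * FreeAlgebra.ι K 3)
      (FreeAlgebra.ι K 3 * FreeAlgebra.ι K 2)
  | e1e3 : UqB2Rel K q (FreeAlgebra.ι K 0 * FreeAlgebra.ι K 2)
      (q⁻¹ ^ 2 • (FreeAlgebra.ι K 2 * FreeAlgebra.ι K 0))
  | e2e3 : UqB2Rel K q (FreeAlgebra.ι K 1 * FreeAlgebra.ι K 2)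
      (q ^ 2 • (FreeAlgebra.ι K 2 * FreeAlgebra.ι K 1) + FreeAlgebra.ι K 3)
  | e2e1 : UqB2Rel K q (FreeAlgebra.ι K 1 * FreeAlgebra.ι K 0)
      (q⁻¹ ^ 2 • (FreeAlgebra.ι K 0 * FreeAlgebra.ι K 1) - q⁻¹ ^ 2 • FreeAlgebra.ι K 2)

/-- `U_q^+(B_2)`, presented by generators `e1, e2, e3, z` and the relations above. -/
abbrev UqB2 (K : Type*) [Field K] (q : K) : Type _ := RingQuot (UqB2Rel K q)

variable (K : Type*) [Field K] (q : K)

/-- The generator `e1` of `U_q^+(B_2)`. -/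
def Ue1 : UqB2 K q := RingQuot.mkAlgHom K (UqB2Rel K q) (FreeAlgebra.ι K 0)
/-- The generator `e2` of `U_q^+(B_2)`. -/
def Ue2 : UqB2 K q := RingQuot.mkAlgHom K (UqB2Rel K q) (FreeAlgebra.ι K 1)
/-- The generator `e3` of `U_q^+(B_2)`. -/
def Ue3 : UqB2 K q := RingQuot.mkAlgHom K (UqB2Rel K q) (FreeAlgebra.ι K 2)
/-- The generator `z` of `U_q^+(B_2)`. -/
def Uz : UqB2 K q := RingQuot.mkAlgHom K (UqB2Rel K q) (FreeAlgebra.ι K 3)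

section Aux

variable {K : Type*} [Field K] {q : K}

open Finset in
/-- coefficient `c_k = u^k v^2 (∑_{j<k} (v^2)^j)` appearing in `e2 * e1^k`. -/
def cCoef (q : K) (k : ℕ) : K :=
  (q ^ 2) ^ k * (q⁻¹ ^ 2) ^ 2 * ∑ j ∈ range k, ((q⁻¹ ^ 2) ^ 2) ^ j

open Finset in
/-- coefficient `a_k = v u^k (∑_{j<k} (v^2)^j)` appearing in `e1 * e2^k`. -/
def aCoef (q : K) (k : ℕ) : K :=
  q⁻¹ ^ 2 * (q ^ 2) ^ k * ∑ j ∈ range k, ((q⁻¹ ^ 2) ^ 2) ^ j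

open Finset in
/-- coefficient `b_k = -v ∑_{i<k} a_i` appearing in `e1 * e2^k`. -/
def bCoef (q : K) (k : ℕ) : K :=
  -(q⁻¹ ^ 2) * ∑ i ∈ range k, aCoef q i

lemma cCoef_succ (hq0 : q ≠ 0) (k : ℕ) :
    cCoef q (k + 1) = (q⁻¹ ^ 2) ^ (k + 1) + q ^ 2 * cCoef q k := by
  unfold cCoef
  rw [geom_sum_succ']
  have h : q⁻¹ ^ 2 * q ^ 2 = 1 := by field_simp
  have e : (q ^ 2) ^ (k + 1) * (q⁻¹ ^ 2) ^ 2 * ((q⁻¹ ^ 2) ^ 2) ^ k = (q⁻¹ ^ 2) ^ (k + 1) := by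
    calc _ = (q⁻¹ ^ 2 * q ^ 2) ^ (k + 1) * (q⁻¹ ^ 2) ^ (k + 1) := by ring
      _ = _ := by rw [h, one_pow, one_mul]
  linear_combination e

lemma aCoef_succ (hq0 : q ≠ 0) (k : ℕ) :
    aCoef q (k + 1) = (q ^ 2) ^ k + q⁻¹ ^ 2 * aCoef q k := by
  unfold aCoef
  rw [geom_sum_succ]
  field_simp
  ring

lemma bCoef_succ (k : ℕ) :
    bCoef q (k + 1) = bCoef q k - q⁻¹ ^ 2 * aCoef q k := by
  unfold bCoef
  rw [Finset.sum_range_succ]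
  ring

section Rels

variable (K q)

lemma rel_e1z : Ue1 K q * Uz K q = Uz K q * Ue1 K q := by
  simpa only [map_mul, Ue1, Uz] using RingQuot.mkAlgHom_rel K (UqB2Rel.e1z (K := K) (q := q))

lemma rel_e2z : Ue2 K q * Uz K q = Uz K q * Ue2 K q := by
  simpa only [map_mul, Ue2, Uz] using RingQuot.mkAlgHom_rel K (UqB2Rel.e2z (K := K) (q := q))

lemma rel_e3z : Ue3 K q * Uz K q = Uz K q * Ue3 K q := by
  simpa only [map_mul, Ue3, Uz] using RingQuot.mkAlgHom_rel K (UqB2Rel.e3z (K := K) (q := q))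

lemma rel_e1e3 : Ue1 K q * Ue3 K q = q⁻¹ ^ 2 • (Ue3 K q * Ue1 K q) := by
  simpa only [map_mul, map_smul, Ue1, Ue3] using RingQuot.mkAlgHom_rel K (UqB2Rel.e1e3 (K := K) (q := q))

lemma rel_e2e3 : Ue2 K q * Ue3 K q = q ^ 2 • (Ue3 K q * Ue2 K q) + Uz K q := by
  simpa only [map_mul, map_smul, map_add, Ue2, Ue3, Uz] using
    RingQuot.mkAlgHom_rel K (UqB2Rel.e2e3 (K := K) (q := q))

lemma rel_e2e1 : Ue2 K q * Ue1 K q = q⁻¹ ^ 2 • (Ue1 K q * Ue2 K q) - q⁻¹ ^ 2 • Ue3 K q := by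
  simpa only [map_mul, map_smul, map_sub, Ue1, Ue2, Ue3] using
    RingQuot.mkAlgHom_rel K (UqB2Rel.e2e1 (K := K) (q := q))

end Rels

variable (K)

lemma huv (hq0 : q ≠ 0) : q⁻¹ ^ 2 * q ^ 2 = 1 := by field_simp

lemma rel_e3e1 (hq0 : q ≠ 0) : Ue3 K q * Ue1 K q = q ^ 2 • (Ue1 K q * Ue3 K q) := by
  rw [rel_e1e3, smul_smul, mul_comm, huv K hq0, one_smul]

lemma rel_e3e2 (hq0 : q ≠ 0) :
    Ue3 K q * Ue2 K q = q⁻¹ ^ 2 • (Ue2 K q * Ue3 K q) - q⁻¹ ^ 2 • Uz K q := by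
  rw [rel_e2e3, smul_add, smul_smul, huv K hq0, one_smul]
  abel

lemma rel_e1e2 (hq0 : q ≠ 0) :
    Ue1 K q * Ue2 K q = q ^ 2 • (Ue2 K q * Ue1 K q) + Ue3 K q := by
  rw [rel_e2e1, smul_sub, smul_smul, mul_comm, huv K hq0, one_smul, smul_smul,
    mul_comm, huv K hq0, one_smul]
  abel

/-- `e1^n * e3 = v^n • (e3 * e1^n)` -/
lemma pow_e1_mul_e3 (n : ℕ) :
    Ue1 K q ^ n * Ue3 K q = (q⁻¹ ^ 2) ^ n • (Ue3 K q * Ue1 K q ^ n) := by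
  induction n with
  | zero => simp
  | succ n ih =>
    rw [pow_succ, mul_assoc, rel_e1e3, mul_smul_comm, ← mul_assoc, ih, smul_mul_assoc,
      smul_smul, mul_assoc, ← pow_succ, ← pow_succ']

/-- `e1 * e3^n = v^n • (e3^n * e1)` -/
lemma e1_mul_pow_e3 (n : ℕ) :
    Ue1 K q * Ue3 K q ^ n = (q⁻¹ ^ 2) ^ n • (Ue3 K q ^ n * Ue1 K q) := by
  induction n with
  | zero => simp
  | succ n ih =>
    rw [pow_succ, ← mul_assoc, ih, smul_mul_assoc, mul_assoc, rel_e1e3, mul_smul_comm,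
      smul_smul, ← mul_assoc, ← pow_succ]

open Finset in
/-- `e2 * e3^(n+1) = u^(n+1) • (e3^(n+1) * e2) + (∑_{j<n+1} u^j) • (e3^n * z)` -/
lemma e2_mul_pow_e3 (n : ℕ) :
    Ue2 K q * Ue3 K q ^ (n + 1) = (q ^ 2) ^ (n + 1) • (Ue3 K q ^ (n + 1) * Ue2 K q)
      + (∑ j ∈ range (n + 1), (q ^ 2) ^ j) • (Ue3 K q ^ n * Uz K q) := by
  induction n with
  | zero => simpa using rel_e2e3 K q
  | succ n ih =>
    rw [pow_succ, ← mul_assoc, ih, add_mul, smul_mul_assoc, smul_mul_assoc,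
      mul_assoc, rel_e2e3, mul_assoc, ← rel_e3z, mul_add, mul_smul_comm,
      ← mul_assoc, ← mul_assoc, ← pow_succ, ← pow_succ]
    rw [geom_sum_succ' (n := n + 1)]
    match_scalars <;> ring

open Finset in
/-- `e3 * e2^(n+1) = v^(n+1) • (e2^(n+1) * e3) - (∑_{j<n+1} v^(j+1)) • (e2^n * z)` -/
lemma e3_mul_pow_e2 (hq0 : q ≠ 0) (n : ℕ) :
    Ue3 K q * Ue2 K q ^ (n + 1) = (q⁻¹ ^ 2) ^ (n + 1) • (Ue2 K q ^ (n + 1) * Ue3 K q)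
      - (∑ j ∈ range (n + 1), (q⁻¹ ^ 2) ^ (j + 1)) • (Ue2 K q ^ n * Uz K q) := by
  induction n with
  | zero => simpa using rel_e3e2 K hq0
  | succ n ih =>
    rw [pow_succ, ← mul_assoc, ih, sub_mul, smul_mul_assoc, smul_mul_assoc,
      mul_assoc, rel_e3e2 K hq0, mul_assoc, ← rel_e2z, mul_sub, mul_smul_comm, mul_smul_comm,
      ← mul_assoc, ← mul_assoc, ← pow_succ, ← pow_succ]
    rw [sum_range_succ _ (n + 1)]
    match_scalars <;> ring

/-- `e2 * e1^(n+1) = v^(n+1) • (e1^(n+1) * e2) - c_(n+1) • (e1^n * e3)` -/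
lemma e2_mul_pow_e1 (hq0 : q ≠ 0) (n : ℕ) :
    Ue2 K q * Ue1 K q ^ (n + 1) = (q⁻¹ ^ 2) ^ (n + 1) • (Ue1 K q ^ (n + 1) * Ue2 K q)
      - cCoef q (n + 1) • (Ue1 K q ^ n * Ue3 K q) := by
  induction n with
  | zero =>
    rw [cCoef_succ hq0 0]
    unfold cCoef
    simp only [zero_add, pow_one, pow_zero, one_mul, Finset.range_zero, Finset.sum_empty,
      mul_zero, add_zero]
    rw [rel_e2e1]
  | succ n ih =>
    rw [pow_succ, ← mul_assoc, ih, sub_mul, smul_mul_assoc, smul_mul_assoc,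
      mul_assoc, rel_e2e1, mul_assoc, rel_e3e1 K hq0, mul_sub, mul_smul_comm, mul_smul_comm,
      mul_smul_comm, ← mul_assoc, ← mul_assoc, ← pow_succ, ← pow_succ]
    rw [cCoef_succ hq0 (n + 1)]
    match_scalars <;> ring

/-- `e1 * e2^(n+2) = u^(n+2) • (e2^(n+2) * e1) + a_(n+2) • (e2^(n+1) * e3) + b_(n+2) • (e2^n * z)` -/
lemma e1_mul_pow_e2 (hq0 : q ≠ 0) (n : ℕ) :
    Ue1 K q * Ue2 K q ^ (n + 2) = (q ^ 2) ^ (n + 2) • (Ue2 K q ^ (n + 2) * Ue1 K q)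
      + aCoef q (n + 2) • (Ue2 K q ^ (n + 1) * Ue3 K q)
      + bCoef q (n + 2) • (Ue2 K q ^ n * Uz K q) := by
  induction n with
  | zero =>
    have ha : aCoef q (0 + 2) = q ^ 2 + q⁻¹ ^ 2 := by
      unfold aCoef
      simp only [Finset.sum_range_succ, Finset.sum_range_zero, pow_zero, pow_one, zero_add]
      field_simp
    have hb : bCoef q (0 + 2) = -(q⁻¹ ^ 2) := by
      unfold bCoef aCoef
      simp only [Finset.sum_range_succ, Finset.sum_range_zero, pow_zero, pow_one, zero_add,
        mul_zero, zero_mul, mul_one]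
      field_simp
    rw [ha, hb]
    rw [show (0:ℕ) + 2 = 1 + 1 from rfl, pow_succ (Ue2 K q) 1, pow_one, ← mul_assoc,
      rel_e1e2 K hq0, add_mul, smul_mul_assoc, mul_assoc, rel_e1e2 K hq0, rel_e3e2 K hq0,
      mul_add, mul_smul_comm]
    simp only [zero_add, pow_one, pow_zero, one_mul, mul_assoc]
    match_scalars <;> field_simp <;> ring
  | succ n ih =>
    rw [show n + 1 + 2 = (n + 2) + 1 by ring, pow_succ, ← mul_assoc, ih, add_mul, add_mul,
      smul_mul_assoc, smul_mul_assoc, smul_mul_assoc,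
      mul_assoc, rel_e1e2 K hq0, mul_assoc (Ue2 K q ^ (n+1)), rel_e3e2 K hq0,
      mul_assoc (Ue2 K q ^ n), ← rel_e2z,
      mul_add, mul_smul_comm, mul_sub, mul_smul_comm, mul_smul_comm,
      ← mul_assoc, ← mul_assoc, ← mul_assoc, ← pow_succ, ← pow_succ, ← pow_succ]
    rw [aCoef_succ hq0 (n + 2), bCoef_succ (n + 2)]
    match_scalars <;> ring

end Aux

open Finset in
/-- The elements `e1^l, e2^l, e3^l` and `z` are central in `U_q^+(B_2)`,
i.e. each of them commutes with each of the generators `e1, e2, e3, z`. -/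
theorem stmt2 (m : ℕ) (hm : 5 ≤ m) (hq : IsPrimitiveRoot q m)
    (l : ℕ) (hl : l = if Odd m then m else m / 2) :
    ∀ c ∈ ({Ue1 K q ^ l, Ue2 K q ^ l, Ue3 K q ^ l, Uz K q} : Set (UqB2 K q)),
      ∀ g ∈ ({Ue1 K q, Ue2 K q, Ue3 K q, Uz K q} : Set (UqB2 K q)),
        Commute c g := by
  have hq1 : q ^ m = 1 := hq.pow_eq_one
  have hq0 : q ≠ 0 := by
    rintro rfl
    rw [zero_pow (by omega : m ≠ 0)] at hq1
    exact zero_ne_one hq1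
  have hlm : 2 * l = m ∨ l = m := by
    by_cases h : Odd m
    · right; rw [hl, if_pos h]
    · left
      rw [hl, if_neg h]
      obtain ⟨k, hk⟩ := Nat.not_odd_iff_even.mp h
      omega
  have hl2 : 2 ≤ l := by omega
  have hul : (q ^ 2) ^ l = 1 := by
    rcases hlm with h | h
    · rw [← pow_mul, h, hq1]
    · rw [← pow_mul, h, mul_comm, pow_mul, hq1, one_pow]
  have hu_ne : q ^ 2 ≠ 1 := fun h =>
    absurd (Nat.le_of_dvd (by norm_num) (hq.dvd_of_pow_eq_one 2 h)) (by omega)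
  have hu2_ne : (q ^ 2) ^ 2 ≠ 1 := fun h => by
    rw [← pow_mul] at h
    exact absurd (Nat.le_of_dvd (by norm_num) (hq.dvd_of_pow_eq_one 4 h)) (by omega)
  have hvl : (q⁻¹ ^ 2) ^ l = 1 := by rw [inv_pow, inv_pow, hul, inv_one]
  have hv_ne : q⁻¹ ^ 2 ≠ 1 := by rw [inv_pow]; simpa using hu_ne
  have hwl : ((q⁻¹ ^ 2) ^ 2) ^ l = 1 := by
    rw [← pow_mul, mul_comm, pow_mul, hvl, one_pow]
  have hw_ne : (q⁻¹ ^ 2) ^ 2 ≠ 1 := by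
    rw [inv_pow, inv_pow]; simpa using hu2_ne
  have geomz : ∀ x : K, x ≠ 1 → x ^ l = 1 → ∑ j ∈ range l, x ^ j = 0 := fun x hx hxl => by
    rw [geom_sum_eq hx, hxl, sub_self, zero_div]
  have hSu : ∑ j ∈ range l, (q ^ 2) ^ j = 0 := geomz _ hu_ne hul
  have hSv : ∑ j ∈ range l, (q⁻¹ ^ 2) ^ j = 0 := geomz _ hv_ne hvl
  have hSw : ∑ j ∈ range l, ((q⁻¹ ^ 2) ^ 2) ^ j = 0 := geomz _ hw_ne hwl
  have hSv' : ∑ j ∈ range l, (q⁻¹ ^ 2) ^ (j + 1) = 0 := by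
    rw [Finset.sum_congr rfl fun j _ => pow_succ' (q⁻¹ ^ 2) j, ← Finset.mul_sum, hSv, mul_zero]
  have hcl : cCoef q l = 0 := by unfold cCoef; rw [hSw, mul_zero]
  have hal : aCoef q l = 0 := by unfold aCoef; rw [hSw, mul_zero]
  have hbl : bCoef q l = 0 := by
    have key : ∀ k : ℕ, aCoef q k * ((q⁻¹ ^ 2) ^ 2 - 1)
        = q⁻¹ ^ 2 * (q⁻¹ ^ 2) ^ k - q⁻¹ ^ 2 * (q ^ 2) ^ k := by
      intro k
      unfold aCoef
      rw [mul_assoc, geom_sum_mul]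
      have h1 : ((q⁻¹ ^ 2) ^ 2) ^ k = ((q ^ 2) ^ k * (q ^ 2) ^ k)⁻¹ := by
        rw [inv_pow, inv_pow, inv_pow, ← pow_mul, two_mul, pow_add]
      rw [h1]
      have h2 : (q ^ 2) ^ k ≠ 0 := pow_ne_zero _ (pow_ne_zero _ hq0)
      field_simp
      have h3 : q ^ (k * 2) * q⁻¹ ^ (k * 2) = 1 := by rw [← mul_pow, mul_inv_cancel₀ hq0, one_pow]
      linear_combination (-1 : K) * h3
    have hsum : (∑ i ∈ range l, aCoef q i) * ((q⁻¹ ^ 2) ^ 2 - 1) = 0 := by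
      rw [Finset.sum_mul]
      simp only [key]
      rw [Finset.sum_sub_distrib, ← Finset.mul_sum, ← Finset.mul_sum, hSv, hSu]
      ring
    have hne : (q⁻¹ ^ 2) ^ 2 - 1 ≠ 0 := sub_ne_zero.mpr hw_ne
    have hsum0 : ∑ i ∈ range l, aCoef q i = 0 := by
      rcases mul_eq_zero.mp hsum with h | h
      · exact h
      · exact absurd h hne
    unfold bCoef
    rw [hsum0, mul_zero]
  obtain ⟨k, hk⟩ : ∃ k, l = k + 2 := ⟨l - 2, by omega⟩
  -- commutation facts
  have h1z : Commute (Ue1 K q) (Uz K q) := rel_e1z K q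
  have h2z : Commute (Ue2 K q) (Uz K q) := rel_e2z K q
  have h3z : Commute (Ue3 K q) (Uz K q) := rel_e3z K q
  have c12 : Commute (Ue1 K q ^ l) (Ue2 K q) := by
    have h := e2_mul_pow_e1 K hq0 (k + 1)
    rw [show k + 1 + 1 = l from by omega] at h
    rw [hvl, hcl, one_smul, zero_smul, sub_zero] at h
    exact h.symm
  have c13 : Commute (Ue1 K q ^ l) (Ue3 K q) := by
    have h := pow_e1_mul_e3 (q := q) K l
    rwa [hvl, one_smul] at h
  have c21 : Commute (Ue2 K q ^ l) (Ue1 K q) := by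
    have h := e1_mul_pow_e2 K hq0 k
    rw [show k + 2 = l from hk.symm] at h
    rw [hul, hal, hbl, one_smul, zero_smul, zero_smul, add_zero, add_zero] at h
    exact h.symm
  have c23 : Commute (Ue2 K q ^ l) (Ue3 K q) := by
    have h := e3_mul_pow_e2 K hq0 (k + 1)
    rw [show k + 1 + 1 = l from by omega] at h
    rw [hvl, hSv', one_smul, zero_smul, sub_zero] at h
    exact h.symm
  have c31 : Commute (Ue3 K q ^ l) (Ue1 K q) := by
    have h := e1_mul_pow_e3 (q := q) K l
    rw [hvl, one_smul] at h
    exact h.symm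
  have c32 : Commute (Ue3 K q ^ l) (Ue2 K q) := by
    have h := e2_mul_pow_e3 (q := q) K (k + 1)
    rw [show k + 1 + 1 = l from by omega] at h
    rw [hul, hSu, one_smul, zero_smul, add_zero] at h
    exact h.symm
  intro c hc g hg
  simp only [Set.mem_insert_iff, Set.mem_singleton_iff] at hc hg
  rcases hc with rfl | rfl | rfl | rfl <;> rcases hg with rfl | rfl | rfl | rfl <;>
    first
    | exact (Commute.refl _).pow_left l
    | exact c12
    | exact c13
    | exact h1z.pow_left l
    | exact c21
    | exact c23
    | exact h2z.pow_left l
    | exact c31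
    | exact c32
    | exact h3z.pow_left l
    | exact h1z.symm
    | exact h2z.symm
    | exact h3z.symm
    | exact Commute.refl _
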